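/- Let A and B be symmetric positive definite p×p real matrices, let D be a symmetric positive semidefinite p×p real matrix, and let α ∈ [0,1]. Then the matrices A⁻¹ + D, B⁻¹ + D and (α·A + (1−α)·B)⁻¹ + D are positive definite (hence invertible), and the matrix ((α·A + (1−α)·B)⁻¹ + D)⁻¹ − [ α·(A⁻¹ + D)⁻¹ + (1−α)·(B⁻¹ + D)⁻¹ ] is positive semidefinite. (In design language: the information matrix of a convex combination of two designs dominates, in the Loewner order, the convex combination of the information matrices, for information matrices of the form M(ξ) = (M̃(ξ)⁻¹ + D)⁻¹ with M̃ linear in the design ξ.) -/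

import Mathlib

open Matrix Real Finset

private lemma ring_key {R : Type*} [Ring R] (x d f g h : R)
    (h1 : f * d * x = x - f) (h2 : x * d * f = x - f) :
    (1 - h * d) * x * (1 - d * g) + h * d * g - f
      = (h - f) * (d + d * x * d) * (g - f) := by
  have k1 : f * d * x * d * g = x * d * g - f * d * g := by
    rw [h1]; noncomm_ring
  have k2 : f * d * x * d * f = x - f - f * d * f := by
    rw [h1, sub_mul, sub_mul, h2]
  have k3 : h * d * x * d * f = h * d * x - h * d * f := by
    have e : h * d * x * d * f = h * d * (x * d * f) := by noncomm_ring
    rw [e, h2]; noncomm_ring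
  have expand : (h - f) * (d + d * x * d) * (g - f)
      = h * d * g + h * d * x * d * g - h * d * f - h * d * x * d * f
        - f * d * g - f * d * x * d * g + f * d * f + f * d * x * d * f := by
    noncomm_ring
  rw [expand, k1, k2, k3]
  noncomm_ring

private lemma smul_herm {p : ℕ} {M : Matrix (Fin p) (Fin p) ℝ} (hM : M.IsHermitian)
    (c : ℝ) : (c • M).IsHermitian := by
  show (c • M)ᴴ = c • M
  rw [conjTranspose_smul, star_trivial, hM.eq]

private lemma smul_posSemidef {p : ℕ} {M : Matrix (Fin p) (Fin p) ℝ} (hM : M.PosSemidef)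
    {c : ℝ} (hc : 0 ≤ c) : (c • M).PosSemidef := by
  refine posSemidef_iff_dotProduct_mulVec.mpr ⟨smul_herm hM.1 c, fun x => ?_⟩
  rw [smul_mulVec, dotProduct_smul]
  exact smul_nonneg hc (hM.dotProduct_mulVec_nonneg x)

private lemma smul_posDef {p : ℕ} {M : Matrix (Fin p) (Fin p) ℝ} (hM : M.PosDef)
    {c : ℝ} (hc : 0 < c) : (c • M).PosDef := by
  refine posDef_iff_dotProduct_mulVec.mpr ⟨smul_herm hM.1 c, fun x hx => ?_⟩
  rw [smul_mulVec, dotProduct_smul]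
  exact smul_pos hc (hM.dotProduct_mulVec_pos hx)

/-- For a positive definite `X` with `X⁻¹ + D` positive definite,
`F := (X⁻¹ + D)⁻¹` satisfies `F * D * X = X - F` and `X * D * F = X - F`. -/
private lemma FDX_eq {p : ℕ} {X D : Matrix (Fin p) (Fin p) ℝ} (hX : X.PosDef)
    (hS : (X⁻¹ + D).PosDef) :
    (X⁻¹ + D)⁻¹ * D * X = X - (X⁻¹ + D)⁻¹ ∧
    X * D * (X⁻¹ + D)⁻¹ = X - (X⁻¹ + D)⁻¹ := by
  set F := (X⁻¹ + D)⁻¹ with hF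
  have hdet : IsUnit (X⁻¹ + D).det := hS.det_pos.ne'.isUnit
  have hFS : F * (X⁻¹ + D) = 1 := Matrix.nonsing_inv_mul _ hdet
  have hSF : (X⁻¹ + D) * F = 1 := Matrix.mul_nonsing_inv _ hdet
  have hXdet : IsUnit X.det := hX.det_pos.ne'.isUnit
  have hXi : X⁻¹ * X = 1 := Matrix.nonsing_inv_mul _ hXdet
  have hXi' : X * X⁻¹ = 1 := Matrix.mul_nonsing_inv _ hXdet
  constructor
  · have h' : F * (X⁻¹ + D) * X = X := by rw [hFS, one_mul]
    rw [mul_add, add_mul, mul_assoc F X⁻¹ X, hXi, mul_one] at h'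
    exact eq_sub_of_add_eq' h'
  · have h' : X * ((X⁻¹ + D) * F) = X := by rw [hSF, mul_one]
    rw [add_mul, mul_add, ← mul_assoc X X⁻¹ F, hXi', one_mul, ← mul_assoc X D F] at h'
    exact eq_sub_of_add_eq' h'

/-- `(G - F)ᵀ * (D + D * X * D) * (G - F)` is positive semidefinite. -/
private lemma sandwich_psd {p : ℕ} {X D : Matrix (Fin p) (Fin p) ℝ} (hX : X.PosDef)
    (hD : D.PosSemidef) (C : Matrix (Fin p) (Fin p) ℝ) :
    (Cᵀ * (D + D * X * D) * C).PosSemidef := by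
  have hDt : Dᵀ = D := by
    rw [← conjTranspose_eq_transpose_of_trivial]; exact hD.1
  have hDXD : (D * X * D).PosSemidef := by
    have h := hX.posSemidef.conjTranspose_mul_mul_same D
    rwa [conjTranspose_eq_transpose_of_trivial, hDt] at h
  have hsum : (D + D * X * D).PosSemidef := hD.add hDXD
  have h := hsum.conjTranspose_mul_mul_same C
  rwa [conjTranspose_eq_transpose_of_trivial] at h

theorem information_matrix_superadditive
    (p : ℕ) (A B D : Matrix (Fin p) (Fin p) ℝ)
    (hA : A.PosDef) (hB : B.PosDef) (hD : D.PosSemidef)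
    (α : ℝ) (hα0 : 0 ≤ α) (hα1 : α ≤ 1) :
    (A⁻¹ + D).PosDef ∧ (B⁻¹ + D).PosDef ∧
    ((α • A + (1 - α) • B)⁻¹ + D).PosDef ∧
    (((α • A + (1 - α) • B)⁻¹ + D)⁻¹ -
      (α • (A⁻¹ + D)⁻¹ + (1 - α) • (B⁻¹ + D)⁻¹)).PosSemidef := by
  set M := α • A + (1 - α) • B with hM
  have hMpd : M.PosDef := by
    rcases eq_or_lt_of_le hα0 with h0 | h0
    · have : M = B := by rw [hM, ← h0]; simp
      rw [this]; exact hB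
    · rcases eq_or_lt_of_le hα1 with h1 | h1
      · have : M = A := by rw [hM, h1]; simp
        rw [this]; exact hA
      · exact (smul_posDef hA h0).add (smul_posDef hB (by linarith))
  have hSA : (A⁻¹ + D).PosDef := hA.inv.add_posSemidef hD
  have hSB : (B⁻¹ + D).PosDef := hB.inv.add_posSemidef hD
  have hSM : (M⁻¹ + D).PosDef := hMpd.inv.add_posSemidef hD
  refine ⟨hSA, hSB, hSM, ?_⟩
  set FA := (A⁻¹ + D)⁻¹ with hFA
  set FB := (B⁻¹ + D)⁻¹ with hFB
  set G := (M⁻¹ + D)⁻¹ with hG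
  have hFAt : FAᵀ = FA := by
    have := hSA.isHermitian.inv
    rwa [IsHermitian, conjTranspose_eq_transpose_of_trivial] at this
  have hFBt : FBᵀ = FB := by
    have := hSB.isHermitian.inv
    rwa [IsHermitian, conjTranspose_eq_transpose_of_trivial] at this
  obtain ⟨hA1, hA2⟩ := FDX_eq hA hSA
  obtain ⟨hB1, hB2⟩ := FDX_eq hB hSB
  obtain ⟨hM1, hM2⟩ := FDX_eq hMpd hSM
  have keyA := ring_key A D FA G Gᵀ hA1 hA2
  have keyB := ring_key B D FB G Gᵀ hB1 hB2
  have keyM := ring_key M D G G Gᵀ hM1 hM2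
  have eqM : (1 - Gᵀ * D) * M * (1 - D * G) + Gᵀ * D * G = G := by
    rw [sub_self, Matrix.mul_zero] at keyM
    exact sub_eq_zero.mp keyM
  have lin : (1 - Gᵀ * D) * M * (1 - D * G)
      = α • ((1 - Gᵀ * D) * A * (1 - D * G))
        + (1 - α) • ((1 - Gᵀ * D) * B * (1 - D * G)) := by
    rw [hM, Matrix.mul_add, Matrix.add_mul, Matrix.mul_smul, Matrix.mul_smul,
      Matrix.smul_mul, Matrix.smul_mul]
  have decomp : G - (α • FA + (1 - α) • FB)
      = α • ((1 - Gᵀ * D) * A * (1 - D * G) + Gᵀ * D * G - FA)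
        + (1 - α) • ((1 - Gᵀ * D) * B * (1 - D * G) + Gᵀ * D * G - FB) := by
    conv_lhs => rw [← eqM, lin]
    module
  rw [keyA, keyB] at decomp
  rw [decomp]
  have hta : Gᵀ - FA = (G - FA)ᵀ := by rw [transpose_sub, hFAt]
  have htb : Gᵀ - FB = (G - FB)ᵀ := by rw [transpose_sub, hFBt]
  rw [hta, htb]
  exact (smul_posSemidef (sandwich_psd hA hD _) hα0).add
    (smul_posSemidef (sandwich_psd hB hD _) (by linarith))
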